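/- For every s ≥ 0, ||Q_{2^s}|| = (√(1 − 2γ_{s+1})/2)·exp(2^s Σ_{k=1}^s 2^{−k} log γ_k), and consequently the Widom factor satisfies W_{2^s} = √(1 − 2γ_{s+1}) / (2·exp(Σ_{k=s+1}^∞ 2^{s−k} log γ_k)) ≥ √2. -/

import Mathlib

open Polynomial MeasureTheory Filter

/-- `r γ s` : the recursively defined scales `r 0 = 1`, `r (s+1) = γ (s+1) * (r s)²`. -/
noncomputable def r (γ : ℕ → ℝ) : ℕ → ℝ
  | 0 => 1
  | s + 1 => γ (s + 1) * (r γ s) ^ 2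

/-- `P γ s` : the polynomial `P_{2^s}`, with `P_1 = X - 1` and
`P_{2^{s+1}} = P_{2^s} · (P_{2^s} + r_s)`. -/
noncomputable def P (γ : ℕ → ℝ) : ℕ → Polynomial ℝ
  | 0 => X - 1
  | s + 1 => P γ s * (P γ s + C (r γ s))

/-- The integral `∫ f dν_s` of a function `f` against the normalized counting measure `ν_s`
on the `2^s` (simple, real) zeros of `P_{2^s} + r_s/2`. -/
noncomputable def nuInt (γ : ℕ → ℝ) (s : ℕ) (f : ℝ → ℝ) : ℝ :=
  (((P γ s + C (r γ s / 2)).roots.map f).sum) / 2 ^ s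

/-- The Widom factors `W_n = ‖Q_n‖ / C^n`, where `‖f‖ = (∫ f² dμ)^{1/2}` and
`C = exp(Σ_{k=1}^∞ 2^{-k} log γ_k)` is the logarithmic capacity of `K(γ)`. -/
noncomputable def widomW (γ : ℕ → ℝ) (μ : MeasureTheory.Measure ℝ)
    (Q : ℕ → Polynomial ℝ) (n : ℕ) : ℝ :=
  Real.sqrt (∫ x, ((Q n).eval x) ^ 2 ∂μ) /
    (Real.exp (∑' k : ℕ, (1 / 2 : ℝ) ^ (k + 1) * Real.log (γ (k + 1)))) ^ n

noncomputable def fp (γ : ℕ → ℝ) (t : ℕ) : Polynomial ℝ := P γ t + C (r γ t / 2)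

noncomputable def aa (γ : ℕ → ℝ) (t : ℕ) : ℝ := (r γ t)^2/4 - r γ (t+1)/2

lemma monic_add_C {p : Polynomial ℝ} (hp : p.Monic) (hd : 0 < p.natDegree) (a : ℝ) :
    (p + C a).Monic :=
  hp.add_of_left (lt_of_le_of_lt (degree_C_le) (natDegree_pos_iff_degree_pos.1 hd))

lemma P_monic_natDegree (γ : ℕ → ℝ) : ∀ t, (P γ t).Monic ∧ (P γ t).natDegree = 2^t := by
  intro t
  induction t with
  | zero =>
    constructor
    · simpa [P] using (monic_X_sub_C (1:ℝ))
    · show (X - 1 : Polynomial ℝ).natDegree = 1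
      simpa using natDegree_X_sub_C (1:ℝ)
  | succ t ih =>
    obtain ⟨hm, hd⟩ := ih
    have hpos : 0 < (P γ t).natDegree := by rw [hd]; positivity
    have hm2 : (P γ t + C (r γ t)).Monic := monic_add_C hm hpos _
    constructor
    · exact hm.mul hm2
    · show ((P γ t) * (P γ t + C (r γ t))).natDegree = 2^(t+1)
      rw [hm.natDegree_mul hm2, natDegree_add_C, hd]
      ring

lemma fp_monic (γ : ℕ → ℝ) (t : ℕ) : (fp γ t).Monic :=
  monic_add_C (P_monic_natDegree γ t).1
    (by rw [(P_monic_natDegree γ t).2]; positivity) _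

lemma fp_natDegree (γ : ℕ → ℝ) (t : ℕ) : (fp γ t).natDegree = 2^t := by
  rw [fp, natDegree_add_C, (P_monic_natDegree γ t).2]

lemma fpC_monic (γ : ℕ → ℝ) (t : ℕ) (u : ℝ) : (fp γ t - C u).Monic := by
  rw [sub_eq_add_neg, ← C_neg]
  exact monic_add_C (fp_monic γ t) (by rw [fp_natDegree]; positivity) _

lemma fpC_natDegree (γ : ℕ → ℝ) (t : ℕ) (u : ℝ) : (fp γ t - C u).natDegree = 2^t := by
  rw [sub_eq_add_neg, ← C_neg, natDegree_add_C, fp_natDegree]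

lemma fp_zero (γ : ℕ → ℝ) : fp γ 0 = X - C (1/2 : ℝ) := by
  show P γ 0 + C (r γ 0 / 2) = X - C (1/2 : ℝ)
  have h1 : (1 : Polynomial ℝ) = C (1/2) + C (1/2) := by rw [← C_add]; norm_num
  show (X - 1 : Polynomial ℝ) + C ((1:ℝ) / 2) = X - C (1/2 : ℝ)
  rw [h1]; ring

lemma fp_sq (γ : ℕ → ℝ) (t : ℕ) : fp γ (t+1) = (fp γ t)^2 - C (aa γ t) := by
  show P γ t * (P γ t + C (r γ t)) + C (r γ (t+1) / 2)
      = (P γ t + C (r γ t / 2))^2 - C (aa γ t)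
  have h1 : (C (r γ t) : Polynomial ℝ) = C (r γ t / 2) + C (r γ t / 2) := by
    rw [← C_add]; ring_nf
  have h2 : (C (aa γ t) : Polynomial ℝ)
      = C (r γ t / 2) * C (r γ t / 2) - C (r γ (t+1) / 2) := by
    rw [← C_mul, ← C_sub]
    congr 1
    rw [aa]; ring
  linear_combination (P γ t) * h1 + h2

section Key
variable {γ : ℕ → ℝ} (hγ : ∀ s : ℕ, 0 < γ (s + 1) ∧ γ (s + 1) < 1 / 4)
include hγ

lemma r_pos : ∀ t, 0 < r γ t := by
  intro t
  induction t with
  | zero => norm_num [r]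
  | succ t ih => have := (hγ t).1; rw [r]; positivity

lemma r_le_one : ∀ t, r γ t ≤ 1 := by
  intro t
  induction t with
  | zero => norm_num [r]
  | succ t ih =>
    have h1 := (hγ t).2
    have h2 := r_pos hγ t
    rw [r]
    nlinarith

lemma key : ∀ t : ℕ, ∀ u : ℝ, |u| ≤ r γ t / 2 →
    Multiset.card ((fp γ t - C u).roots) = 2^t ∧
    ∀ S : Finset ℕ, S.Nonempty → (∀ j ∈ S, j < t) →
      (((fp γ t - C u).roots).map (fun x => ∏ j ∈ S, (fp γ j).eval x)).sum = 0 := by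
  intro t
  induction t with
  | zero =>
    intro u _
    have e : fp γ 0 - C u = X - C (1/2 + u) := by rw [fp_zero, C_add]; ring
    constructor
    · rw [e, roots_X_sub_C]; rfl
    · intro S hS hlt
      obtain ⟨j, hj⟩ := hS
      exact absurd (hlt j hj) (Nat.not_lt_zero j)
  | succ t ih =>
    intro u hu
    have hrpos := r_pos hγ t
    have hrpos1 := r_pos hγ (t+1)
    have hγ1 := (hγ t).1
    have hγ2 := (hγ t).2
    have habs := abs_le.1 hu
    have hr1 : r γ (t+1) = γ (t+1) * (r γ t)^2 := rfl
    have hAu : 0 ≤ aa γ t + u := by rw [aa]; nlinarith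
    set c := Real.sqrt (aa γ t + u) with hc
    have hc0 : 0 ≤ c := Real.sqrt_nonneg _
    have hc2 : c^2 = aa γ t + u := Real.sq_sqrt hAu
    have hcle : c ≤ r γ t / 2 := by
      have h1 : aa γ t + u ≤ (r γ t / 2)^2 := by rw [aa]; nlinarith
      calc c ≤ Real.sqrt ((r γ t / 2)^2) := Real.sqrt_le_sqrt h1
        _ = r γ t / 2 := Real.sqrt_sq (by positivity)
    have hcabs : |c| ≤ r γ t / 2 := by rwa [abs_of_nonneg hc0]
    have hcabs' : |(-c)| ≤ r γ t / 2 := by rwa [abs_neg, abs_of_nonneg hc0]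
    have hfact : fp γ (t+1) - C u = (fp γ t - C c) * (fp γ t - C (-c)) := by
      rw [fp_sq, C_neg, sub_neg_eq_add]
      have hcc : (C c * C c : Polynomial ℝ) = C (aa γ t) + C u := by
        rw [← C_mul, ← C_add]
        congr 1
        nlinarith [hc2]
      linear_combination hcc
    have hne : (fp γ t - C c) * (fp γ t - C (-c)) ≠ 0 :=
      mul_ne_zero (fpC_monic γ t c).ne_zero (fpC_monic γ t (-c)).ne_zero
    have hroots : (fp γ (t+1) - C u).roots
        = (fp γ t - C c).roots + (fp γ t - C (-c)).roots := by
      rw [hfact, roots_mul hne]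
    obtain ⟨ihc1, ihc2⟩ := ih c hcabs
    obtain ⟨ihd1, ihd2⟩ := ih (-c) hcabs'
    constructor
    · rw [hroots, Multiset.card_add, ihc1, ihd1]; ring
    · intro S hS hlt
      rw [hroots, Multiset.map_add, Multiset.sum_add]
      by_cases ht : t ∈ S
      · -- split off the factor fp t
        have heval : ∀ v : ℝ, ∀ x ∈ (fp γ t - C v).roots, (fp γ t).eval x = v := by
          intro v x hx
          have := (mem_roots (fpC_monic γ t v).ne_zero).1 hx
          rw [IsRoot, eval_sub, eval_C, sub_eq_zero] at this
          exact this
        have hbranch : ∀ v : ℝ, |v| ≤ r γ t / 2 →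
            (((fp γ t - C v).roots).map (fun x => ∏ j ∈ S, (fp γ j).eval x)).sum
              = v * (((fp γ t - C v).roots).map
                  (fun x => ∏ j ∈ S.erase t, (fp γ j).eval x)).sum := by
          intro v hv
          rw [← Multiset.sum_map_mul_left]
          apply congrArg
          apply Multiset.map_congr rfl
          intro x hx
          rw [← Finset.mul_prod_erase S _ ht, heval v x hx]
        rw [hbranch c hcabs, hbranch (-c) hcabs']
        by_cases hS' : (S.erase t).Nonempty
        · have hlt' : ∀ j ∈ S.erase t, j < t := by
            intro j hj
            have h1 := Finset.ne_of_mem_erase hj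
            have h2 := hlt j (Finset.mem_of_mem_erase hj)
            omega
          rw [ihc2 _ hS' hlt', ihd2 _ hS' hlt']
          ring
        · have hSe : S.erase t = ∅ := Finset.not_nonempty_iff_eq_empty.1 hS'
          rw [hSe]
          simp only [Finset.prod_empty]
          simp only [Multiset.map_const', Multiset.sum_replicate, ihc1, ihd1,
            smul_eq_mul, mul_one]
          ring
      · have hlt' : ∀ j ∈ S, j < t := by
          intro j hj
          have := hlt j hj
          have : j ≠ t := fun h => ht (h ▸ hj)
          omega
        rw [ihc2 S hS hlt', ihd2 S hS hlt']
        ring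

end Key

lemma span_lemma : ∀ j d : ℕ, d < 2^j → ∃ S : Finset ℕ, (∀ i ∈ S, i < j) ∧ ∑ i ∈ S, 2^i = d := by
  intro j
  induction j with
  | zero =>
    intro d hd
    interval_cases d
    exact ⟨∅, by simp, by simp⟩
  | succ j ih =>
    intro d hd
    by_cases h : d < 2^j
    · obtain ⟨S, h1, h2⟩ := ih d h
      exact ⟨S, fun i hi => Nat.lt_succ_of_lt (h1 i hi), h2⟩
    · push_neg at h
      have h2j : 0 < 2^j := by positivity
      obtain ⟨S, h1, h2⟩ := ih (d - 2^j) (by rw [pow_succ] at hd; omega)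
      refine ⟨insert j S, ?_, ?_⟩
      · intro i hi
        rcases Finset.mem_insert.1 hi with h' | h'
        · omega
        · exact Nat.lt_succ_of_lt (h1 i h')
      · rw [Finset.sum_insert (fun hj => lt_irrefl j (h1 j hj)), h2]
        omega

section Meas
variable {γ : ℕ → ℝ} (hγ : ∀ s : ℕ, 0 < γ (s + 1) ∧ γ (s + 1) < 1 / 4)
variable {μ : Measure ℝ} [IsProbabilityMeasure μ]
variable (hμint : ∀ p : Polynomial ℝ, Integrable (fun x => p.eval x) μ)
variable (hμconv : ∀ p : Polynomial ℝ,
      Tendsto (fun s => nuInt γ s (fun x => p.eval x)) atTop (nhds (∫ x, p.eval x ∂μ)))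

include hγ hμconv in
lemma prod_integral_zero (S : Finset ℕ) (hS : S.Nonempty) :
    ∫ x, eval x (∏ j ∈ S, fp γ j) ∂μ = 0 := by
  set p := ∏ j ∈ S, fp γ j with hp
  have hzero : ∀ t, S.max' hS + 1 ≤ t → nuInt γ t (fun x => eval x p) = 0 := by
    intro t ht
    have hlt : ∀ j ∈ S, j < t := fun j hj =>
      lt_of_le_of_lt (S.le_max' j hj) (by omega)
    have habs : |(0:ℝ)| ≤ r γ t / 2 := by
      rw [abs_zero]
      have := r_pos hγ t
      positivity
    have hkey := (key hγ t 0 habs).2 S hS hlt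
    rw [nuInt]
    have hpoly : P γ t + C (r γ t / 2) = fp γ t - C 0 := by rw [C_0, sub_zero]; rfl
    have hfun : (fun x => eval x p) = fun x => ∏ j ∈ S, eval x (fp γ j) := by
      funext x; rw [hp, eval_prod]
    rw [hpoly, hfun, hkey, zero_div]
  have h0 : Tendsto (fun t => nuInt γ t (fun x => eval x p)) atTop (nhds 0) :=
    tendsto_const_nhds.congr'
      (eventually_atTop.2 ⟨S.max' hS + 1, fun t ht => (hzero t ht).symm⟩)
  exact tendsto_nhds_unique (hμconv p) h0

include hγ hμint hμconv in
lemma ortho_lemma (s : ℕ) (p : Polynomial ℝ) (hdlt : p.natDegree < 2 ^ s) :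
    ∫ x, eval x (fp γ s) * eval x p ∂μ = 0 := by
  have main : ∀ n, ∀ p : Polynomial ℝ, p.natDegree ≤ n → p.natDegree < 2 ^ s →
      ∫ x, eval x (fp γ s) * eval x p ∂μ = 0 := by
    intro n
    induction n using Nat.strong_induction_on with
    | _ n IH =>
      intro p hpn hplt
      by_cases hp : p = 0
      · simp [hp]
      obtain ⟨S, hSlt, hSsum⟩ := span_lemma s p.natDegree hplt
      set q := ∏ i ∈ S, fp γ i with hq
      have hqm : q.Monic := monic_prod_of_monic _ _ (fun i _ => fp_monic γ i)
      have hqd : q.natDegree = p.natDegree := by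
        rw [hq, natDegree_prod _ _ (fun i _ => (fp_monic γ i).ne_zero)]
        simp_rw [fp_natDegree]
        exact hSsum
      have hqint : ∫ x, eval x (fp γ s) * eval x q ∂μ = 0 := by
        have hs : s ∉ S := fun h => lt_irrefl s (hSlt s h)
        have hfun : (fun x => eval x (fp γ s) * eval x q)
            = fun x => eval x (∏ i ∈ insert s S, fp γ i) := by
          funext x
          rw [Finset.prod_insert hs, eval_mul]
        rw [hfun]
        exact prod_integral_zero hγ hμconv _ (Finset.insert_nonempty s S)
      set l := p.leadingCoeff with hldef
      have hl : l ≠ 0 := leadingCoeff_ne_zero.2 hp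
      have hsplit : ∫ x, eval x (fp γ s) * eval x p ∂μ
          = (∫ x, eval x (fp γ s) * eval x (p - C l * q) ∂μ)
            + l * ∫ x, eval x (fp γ s) * eval x q ∂μ := by
        have hfun : (fun x => eval x (fp γ s) * eval x p)
            = fun x => eval x (fp γ s * (p - C l * q)) + eval x (C l * (fp γ s * q)) := by
          funext x
          simp only [eval_mul, eval_sub, eval_C]
          ring
        rw [hfun, integral_add (hμint _) (hμint _)]
        congr 1
        · apply integral_congr_ae
          filter_upwards with x
          rw [eval_mul]
        · have hfun2 : (fun x => eval x (C l * (fp γ s * q)))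
              = fun x => l * (eval x (fp γ s) * eval x q) := by
            funext x
            simp only [eval_mul, eval_C]
          rw [hfun2, MeasureTheory.integral_const_mul]
      rw [hsplit, hqint, mul_zero, add_zero]
      by_cases hp' : p - C l * q = 0
      · rw [hp']
        simp
      · have hdq : p.degree = (C l * q).degree := by
          rw [degree_mul, degree_C hl, zero_add, degree_eq_natDegree hqm.ne_zero,
            degree_eq_natDegree hp, hqd]
        have hlc : p.leadingCoeff = (C l * q).leadingCoeff := by
          rw [leadingCoeff_mul, leadingCoeff_C, hqm.leadingCoeff, mul_one]
        have hdlt' : (p - C l * q).degree < p.degree := degree_sub_lt hdq hp hlc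
        have hnlt : (p - C l * q).natDegree < p.natDegree :=
          natDegree_lt_natDegree hp' hdlt'
        exact IH (p - C l * q).natDegree (by omega) _ le_rfl (by omega)
  exact main p.natDegree p le_rfl hdlt

include hγ hμint hμconv in
lemma fp_sq_integral (s : ℕ) : ∫ x, (eval x (fp γ s))^2 ∂μ = aa γ s := by
  have hfun : (fun x => (eval x (fp γ s))^2)
      = fun x => eval x (fp γ (s+1)) + aa γ s := by
    funext x
    rw [fp_sq γ s, eval_sub, eval_pow, eval_C]
    ring
  rw [hfun, integral_add (hμint _) (integrable_const _), integral_const]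
  have h1 : ∫ x, eval x (fp γ (s+1)) ∂μ = 0 := by
    have := prod_integral_zero hγ hμconv {s+1} (Finset.singleton_nonempty _)
    rwa [Finset.prod_singleton] at this
  rw [h1]
  simp [measure_univ]

end Meas

section End
variable {γ : ℕ → ℝ} (hγ : ∀ s : ℕ, 0 < γ (s + 1) ∧ γ (s + 1) < 1 / 4)
include hγ

lemma r_exp : ∀ s : ℕ,
    r γ s = Real.exp ((2 ^ s : ℝ) * ∑ k ∈ Finset.Icc 1 s, (1 / 2 : ℝ) ^ k * Real.log (γ k)) := by
  intro s
  induction s with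
  | zero => simp [r]
  | succ s ih =>
    have hlog : γ (s + 1) = Real.exp (Real.log (γ (s + 1))) := (Real.exp_log (hγ s).1).symm
    have hstep : r γ (s + 1) = γ (s + 1) * (r γ s) ^ 2 := rfl
    rw [hstep, ih, hlog, sq, ← Real.exp_add, ← Real.exp_add]
    congr 1
    rw [Finset.sum_Icc_succ_top (by omega : 1 ≤ s + 1)]
    have h1 : (2 : ℝ) ^ (s + 1) * (1 / 2 : ℝ) ^ (s + 1) = 1 := by
      rw [← mul_pow]; norm_num
    linear_combination - Real.log (γ (s + 1)) * h1

lemma sqrt_aa (s : ℕ) :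
    Real.sqrt (aa γ s) = Real.sqrt (1 - 2 * γ (s + 1)) / 2 * r γ s := by
  have h1 : (0:ℝ) ≤ 1 - 2 * γ (s + 1) := by have := (hγ s).2; linarith
  have h2 : 0 < r γ s := r_pos hγ s
  have h3 : aa γ s = (Real.sqrt (1 - 2 * γ (s + 1)) / 2 * r γ s) ^ 2 := by
    rw [mul_pow, div_pow, Real.sq_sqrt h1, aa,
      show r γ (s + 1) = γ (s + 1) * (r γ s) ^ 2 from rfl]
    ring
  rw [h3, Real.sqrt_sq (by positivity)]

end End

set_option maxHeartbeats 1000000 in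
theorem stmt_18 (γ : ℕ → ℝ) (hγ : ∀ s : ℕ, 0 < γ (s + 1) ∧ γ (s + 1) < 1 / 4)
    (hcap : Summable fun k : ℕ => (1 / 2 : ℝ) ^ (k + 1) * Real.log (1 / γ (k + 1)))
    (μ : Measure ℝ) [IsProbabilityMeasure μ]
    (hμint : ∀ p : Polynomial ℝ, Integrable (fun x => p.eval x) μ)
    (hμpos : ∀ p : Polynomial ℝ, p ≠ 0 → 0 < ∫ x, (p.eval x) ^ 2 ∂μ)
    (hμconv : ∀ p : Polynomial ℝ,
      Tendsto (fun s => nuInt γ s (fun x => p.eval x)) atTop (nhds (∫ x, p.eval x ∂μ)))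
    (Q : ℕ → Polynomial ℝ) (hQmonic : ∀ n, (Q n).Monic) (hQdeg : ∀ n, (Q n).natDegree = n)
    (hQorth : ∀ n : ℕ, ∀ p : Polynomial ℝ, p.degree < (n : WithBot ℕ) →
      ∫ x, (Q n).eval x * p.eval x ∂μ = 0)
    (s : ℕ) :
    Real.sqrt (∫ x, ((Q (2 ^ s)).eval x) ^ 2 ∂μ) =
      Real.sqrt (1 - 2 * γ (s + 1)) / 2 *
        Real.exp ((2 ^ s : ℝ) * ∑ k ∈ Finset.Icc 1 s, (1 / 2 : ℝ) ^ k * Real.log (γ k)) ∧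
    widomW γ μ Q (2 ^ s) =
      Real.sqrt (1 - 2 * γ (s + 1)) /
        (2 * Real.exp (∑' j : ℕ, (1 / 2 : ℝ) ^ (j + 1) * Real.log (γ (s + 1 + j)))) ∧
    Real.sqrt 2 ≤ widomW γ μ Q (2 ^ s) := by
  -- Identification of the orthogonal polynomial
  have hQfp : Q (2 ^ s) = fp γ s := by
    set D := Q (2 ^ s) - fp γ s with hD
    by_cases hD0 : D = 0
    · exact sub_eq_zero.1 hD0
    · exfalso
      have hQm := hQmonic (2 ^ s)
      have hQd := hQdeg (2 ^ s)
      have hdQ : (Q (2 ^ s)).degree = ((2 ^ s : ℕ) : WithBot ℕ) := by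
        rw [degree_eq_natDegree hQm.ne_zero, hQd]
      have hdeq : (Q (2 ^ s)).degree = (fp γ s).degree := by
        rw [hdQ, degree_eq_natDegree (fp_monic γ s).ne_zero, fp_natDegree]
      have hlc : (Q (2 ^ s)).leadingCoeff = (fp γ s).leadingCoeff := by
        rw [hQm.leadingCoeff, (fp_monic γ s).leadingCoeff]
      have hdlt : D.degree < (Q (2 ^ s)).degree := degree_sub_lt hdeq hQm.ne_zero hlc
      have h1 : ∫ x, (Q (2 ^ s)).eval x * D.eval x ∂μ = 0 :=
        hQorth (2 ^ s) D (hdQ ▸ hdlt)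
      have hnD : D.natDegree < 2 ^ s := by
        have h := natDegree_lt_natDegree hD0 hdlt
        rwa [hQd] at h
      have h2 : ∫ x, eval x (fp γ s) * eval x D ∂μ = 0 :=
        ortho_lemma hγ hμint hμconv s D hnD
      have hi1 : Integrable (fun x => (Q (2 ^ s)).eval x * D.eval x) μ := by
        have h := hμint (Q (2 ^ s) * D)
        simpa [eval_mul] using h
      have hi2 : Integrable (fun x => eval x (fp γ s) * eval x D) μ := by
        have h := hμint (fp γ s * D)
        simpa [eval_mul] using h
      have hsq : ∫ x, (D.eval x) ^ 2 ∂μ = 0 := by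
        have hfun : (fun x => (D.eval x) ^ 2)
            = fun x => (Q (2 ^ s)).eval x * D.eval x - eval x (fp γ s) * eval x D := by
          funext x
          rw [hD, eval_sub]
          ring
        rw [hfun, integral_sub hi1 hi2, h1, h2, sub_zero]
      exact absurd hsq (ne_of_gt (hμpos D hD0))
  have hint : ∫ x, ((Q (2 ^ s)).eval x) ^ 2 ∂μ = aa γ s := by
    rw [hQfp]
    exact fp_sq_integral hγ hμint hμconv s
  -- Part 1
  have part1 : Real.sqrt (∫ x, ((Q (2 ^ s)).eval x) ^ 2 ∂μ) =
      Real.sqrt (1 - 2 * γ (s + 1)) / 2 *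
        Real.exp ((2 ^ s : ℝ) * ∑ k ∈ Finset.Icc 1 s, (1 / 2 : ℝ) ^ k * Real.log (γ k)) := by
    rw [hint, sqrt_aa hγ s, r_exp hγ s]
  -- tsum bookkeeping
  set Tl := ∑' j : ℕ, (1 / 2 : ℝ) ^ (j + 1) * Real.log (γ (s + 1 + j)) with hTl
  have hsum : Summable (fun k : ℕ => (1 / 2 : ℝ) ^ (k + 1) * Real.log (γ (k + 1))) := by
    refine Summable.congr hcap.neg fun k => ?_
    rw [one_div (γ (k + 1)), Real.log_inv]
    ring
  have h2s : (2 : ℝ) ^ s * (1 / 2 : ℝ) ^ s = 1 := by rw [← mul_pow]; norm_num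
  have hsplit : ∑' k : ℕ, (1 / 2 : ℝ) ^ (k + 1) * Real.log (γ (k + 1))
      = (∑ k ∈ Finset.range s, (1 / 2 : ℝ) ^ (k + 1) * Real.log (γ (k + 1)))
        + (1 / 2 : ℝ) ^ s * Tl := by
    rw [← Summable.sum_add_tsum_nat_add s hsum]
    congr 1
    calc ∑' i : ℕ, (1 / 2 : ℝ) ^ (i + s + 1) * Real.log (γ (i + s + 1))
        = ∑' i : ℕ, (1 / 2 : ℝ) ^ s * ((1 / 2 : ℝ) ^ (i + 1) * Real.log (γ (s + 1 + i))) := by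
          refine tsum_congr fun i => ?_
          rw [show i + s + 1 = s + (i + 1) from by omega, pow_add,
            show s + (i + 1) = s + 1 + i from by omega]
          ring
      _ = (1 / 2 : ℝ) ^ s * Tl := by rw [tsum_mul_left]
  have hfin : ∑ k ∈ Finset.range s, (1 / 2 : ℝ) ^ (k + 1) * Real.log (γ (k + 1))
      = ∑ k ∈ Finset.Icc 1 s, (1 / 2 : ℝ) ^ k * Real.log (γ k) := by
    rw [show Finset.Icc 1 s = Finset.Ico 1 (s + 1) from (Finset.Ico_add_one_right_eq_Icc 1 s).symm,
      Finset.sum_Ico_eq_sum_range]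
    simp only [Nat.add_sub_cancel]
    exact Finset.sum_congr rfl fun i _ => by rw [Nat.add_comm 1 i]
  have hpow : ∀ x : ℝ, (Real.exp x) ^ (2 ^ s : ℕ) = Real.exp ((2 : ℝ) ^ s * x) := by
    intro x
    rw [← Real.exp_nat_mul]
    congr 1
    push_cast
    ring
  -- Part 2
  have part2 : widomW γ μ Q (2 ^ s)
      = Real.sqrt (1 - 2 * γ (s + 1)) / (2 * Real.exp Tl) := by
    rw [widomW, hint, sqrt_aa hγ s, r_exp hγ s, hpow, hsplit, hfin]
    have hmul : (2 : ℝ) ^ s *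
        ((∑ k ∈ Finset.Icc 1 s, (1 / 2 : ℝ) ^ k * Real.log (γ k)) + (1 / 2 : ℝ) ^ s * Tl)
        = (2 : ℝ) ^ s * (∑ k ∈ Finset.Icc 1 s, (1 / 2 : ℝ) ^ k * Real.log (γ k)) + Tl := by
      rw [mul_add, ← mul_assoc, h2s]
      ring
    rw [hmul, Real.exp_add]
    have he1 : Real.exp ((2 : ℝ) ^ s * ∑ k ∈ Finset.Icc 1 s, (1 / 2 : ℝ) ^ k * Real.log (γ k)) ≠ 0 :=
      Real.exp_ne_zero _
    have he2 : Real.exp Tl ≠ 0 := Real.exp_ne_zero _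
    field_simp
  -- Part 3
  have hTlsum : Summable (fun j : ℕ => (1 / 2 : ℝ) ^ (j + 1) * Real.log (γ (s + 1 + j))) := by
    have h1 : Summable (fun j : ℕ => (1 / 2 : ℝ) ^ (j + s + 1) * Real.log (γ (j + s + 1))) :=
      (summable_nat_add_iff s).2 hsum
    refine Summable.congr (h1.mul_left ((2 : ℝ) ^ s)) fun j => ?_
    rw [show j + s + 1 = s + (j + 1) from by omega, pow_add,
      show s + (j + 1) = s + 1 + j from by omega]
    linear_combination (1 / 2 : ℝ) ^ (j + 1) * Real.log (γ (s + 1 + j)) * h2s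
  have hgeo : Summable (fun j : ℕ => (1 / 2 : ℝ) ^ (j + 1) * Real.log (1 / 4 : ℝ)) := by
    have h := (summable_geometric_of_lt_one (by norm_num : (0:ℝ) ≤ 1 / 2)
      (by norm_num : (1 / 2 : ℝ) < 1)).mul_right ((1 / 2 : ℝ) * Real.log (1 / 4 : ℝ))
    refine Summable.congr h fun j => ?_
    rw [pow_succ]
    ring
  have hterm : ∀ j : ℕ, (1 / 2 : ℝ) ^ (j + 1) * Real.log (γ (s + 1 + j))
      ≤ (1 / 2 : ℝ) ^ (j + 1) * Real.log (1 / 4 : ℝ) := by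
    intro j
    have h1 : 0 < γ (s + 1 + j) := by
      have h := (hγ (s + j)).1
      rwa [show s + j + 1 = s + 1 + j from by omega] at h
    have h2 : γ (s + 1 + j) < 1 / 4 := by
      have h := (hγ (s + j)).2
      rwa [show s + j + 1 = s + 1 + j from by omega] at h
    exact mul_le_mul_of_nonneg_left (le_of_lt (Real.log_lt_log h1 h2)) (by positivity)
  have hTlle : Tl ≤ Real.log (1 / 4 : ℝ) := by
    have h1 := Summable.tsum_le_tsum hterm hTlsum hgeo
    have h2 : ∑' j : ℕ, (1 / 2 : ℝ) ^ (j + 1) * Real.log (1 / 4 : ℝ) = Real.log (1 / 4 : ℝ) := by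
      calc ∑' j : ℕ, (1 / 2 : ℝ) ^ (j + 1) * Real.log (1 / 4 : ℝ)
          = ∑' j : ℕ, (1 / 2 : ℝ) ^ j * ((1 / 2 : ℝ) * Real.log (1 / 4 : ℝ)) := by
            refine tsum_congr fun j => ?_
            rw [pow_succ]
            ring
        _ = (∑' j : ℕ, (1 / 2 : ℝ) ^ j) * ((1 / 2 : ℝ) * Real.log (1 / 4 : ℝ)) := tsum_mul_right
        _ = Real.log (1 / 4 : ℝ) := by
            rw [tsum_geometric_of_lt_one (by norm_num) (by norm_num)]
            norm_num
            ring
    exact h1.trans (le_of_eq h2)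
  have hexpTl : Real.exp Tl ≤ 1 / 4 := by
    calc Real.exp Tl ≤ Real.exp (Real.log (1 / 4 : ℝ)) := Real.exp_le_exp.2 hTlle
      _ = 1 / 4 := Real.exp_log (by norm_num)
  have hexppos : (0 : ℝ) < Real.exp Tl := Real.exp_pos _
  have hsqrtle : Real.sqrt (1 / 2 : ℝ) ≤ Real.sqrt (1 - 2 * γ (s + 1)) :=
    Real.sqrt_le_sqrt (by have := (hγ s).2; linarith)
  have hhalf : Real.sqrt (1 / 2 : ℝ) = Real.sqrt 2 / 2 := by
    rw [show (1 / 2 : ℝ) = (Real.sqrt 2 / 2) ^ 2 from by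
      rw [div_pow, Real.sq_sqrt (by norm_num : (0:ℝ) ≤ 2)]; norm_num,
      Real.sqrt_sq (by positivity)]
  have hs2le : Real.sqrt 2 / 2 ≤ Real.sqrt (1 - 2 * γ (s + 1)) := by
    rw [← hhalf]; exact hsqrtle
  have hden : (0:ℝ) < 2 * Real.exp Tl := by positivity
  have hden2 : 2 * Real.exp Tl ≤ 1 / 2 := by linarith
  have part3 : Real.sqrt 2 ≤ widomW γ μ Q (2 ^ s) := by
    rw [part2]
    calc Real.sqrt 2 = (Real.sqrt 2 / 2) / (1 / 2 : ℝ) := by ring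
      _ ≤ Real.sqrt (1 - 2 * γ (s + 1)) / (2 * Real.exp Tl) :=
        div_le_div₀ (Real.sqrt_nonneg _) hs2le hden hden2
  exact ⟨part1, part2, part3⟩
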